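/- Let x ∈ W^×, let β ∈ W^× satisfy σ²(β) − β = x, let ζ ∈ W be a primitive (p² − 1)-th root of unity (i.e. ζ^{p²−1} = 1 and ζ^m ≠ 1 for all 0 < m < p² − 1), and set u := σ(ζ) − ζ. Then there exists b ∈ W^× such that pβb² + ub − σ⁻¹(β) = 0. -/

import Mathlib

noncomputable section

open Pointwise

/-- `k`, an algebraic closure of the field `𝔽_p` with `p` elements. -/
abbrev Kbar (p : ℕ) [Fact p.Prime] : Type _ := AlgebraicClosure (ZMod p)

/-- `W = W(k)`, the ring of Witt vectors with coefficients in `k`. -/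
abbrev Wt (p : ℕ) [Fact p.Prime] : Type _ := WittVector p (Kbar p)

/-- `σ : W → W`, the Witt vector Frobenius automorphism, lifting the `p`-th power map on `k`. -/
def σW (p : ℕ) [Fact p.Prime] : Wt p ≃+* Wt p := WittVector.frobeniusEquiv p (Kbar p)

namespace Statement11Aux

open WittVector

variable {p : ℕ} [hp : Fact p.Prime] {k : Type*}

lemma ver_iterate_coeff_lt [CommRing k] (y : WittVector p k) :
    ∀ (n i : ℕ), i < n → ((⇑(verschiebung (p := p) (R := k)))^[n] y).coeff i = 0 := by
  intro n
  induction n with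
  | zero => omega
  | succ n ih =>
    intro i hi
    rw [Function.iterate_succ_apply']
    cases i with
    | zero => exact verschiebung_coeff_zero _
    | succ i =>
      rw [verschiebung_coeff_succ]
      exact ih i (by omega)

lemma mul_p_pow [CommRing k] [CharP k p] (x : WittVector p k) (n : ℕ) :
    x * (p : WittVector p k) ^ n =
      (⇑(verschiebung (p := p) (R := k)))^[n] (WittVector.frobenius^[n] x) := by
  induction n with
  | zero => simp
  | succ n ih =>
    have hcomm := (WittVector.verschiebung_frobenius_comm (p := p) (R := k)).symm.iterate_right n
    calc x * (p : WittVector p k) ^ (n + 1)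
        = (x * (p : WittVector p k) ^ n) * p := by ring
      _ = verschiebung (WittVector.frobenius
            ((⇑(verschiebung (p := p) (R := k)))^[n] (WittVector.frobenius^[n] x))) := by
          rw [ih, WittVector.verschiebung_frobenius]
      _ = verschiebung ((⇑(verschiebung (p := p) (R := k)))^[n]
            (WittVector.frobenius (WittVector.frobenius^[n] x))) := by
          rw [hcomm _]
      _ = (⇑(verschiebung (p := p) (R := k)))^[n + 1] (WittVector.frobenius^[n + 1] x) := by
          simp only [Function.iterate_succ_apply']

lemma p_pow_dvd_iff [CommRing k] [CharP k p] [PerfectRing k p] (x : WittVector p k) (n : ℕ) :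
    (p : WittVector p k) ^ n ∣ x ↔ ∀ i < n, x.coeff i = 0 := by
  constructor
  · rintro ⟨z, rfl⟩ i hi
    rw [mul_comm, mul_p_pow]
    exact ver_iterate_coeff_lt _ n i hi
  · intro h
    have hx := WittVector.eq_iterate_verschiebung h
    set e := WittVector.frobeniusEquiv p k with he
    have h1 : ∀ y : WittVector p k, WittVector.frobenius (e.symm y) = y := by
      intro y
      rw [show (WittVector.frobenius (e.symm y) : WittVector p k) = e (e.symm y) from
        congrFun (WittVector.frobeniusEquiv_apply p k) (e.symm y) |>.symm, e.apply_symm_apply]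
    have hfe : ∀ (m : ℕ) (w : WittVector p k),
        WittVector.frobenius^[m] ((⇑e.symm)^[m] w) = w := by
      intro m
      induction m with
      | zero => intro w; rfl
      | succ m ihm =>
        intro w
        rw [Function.iterate_succ_apply, Function.iterate_succ_apply', h1, ihm]
    refine ⟨(⇑e.symm)^[n] (x.shift n), ?_⟩
    rw [mul_comm, mul_p_pow, hfe, ← hx]

lemma coeffs_eq_iff [CommRing k] (a b : WittVector p k) (n : ℕ) :
    (∀ i < n, (a - b).coeff i = 0) ↔ ∀ i < n, a.coeff i = b.coeff i := by
  rw [← WittVector.mem_ker_truncate, RingHom.mem_ker, map_sub, sub_eq_zero]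
  constructor
  · intro h i hi
    have := congrArg (TruncatedWittVector.coeff ⟨i, hi⟩) h
    simpa [WittVector.coeff_truncate] using this
  · intro h
    apply TruncatedWittVector.ext
    intro i
    simp only [WittVector.coeff_truncate]
    exact h i i.2

lemma isAdicComplete [Field k] [CharP k p] [PerfectRing k p] :
    IsAdicComplete (Ideal.span {(p : WittVector p k)}) (WittVector p k) := by
  have h1 : IsHausdorff (Ideal.span {(p : WittVector p k)}) (WittVector p k) := by
    refine ⟨fun x hx => ?_⟩
    ext i
    have h := hx (i + 1)
    simp only [← Ideal.one_eq_top, smul_eq_mul, mul_one, SModEq.zero,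
      Ideal.span_singleton_pow, Ideal.mem_span_singleton, p_pow_dvd_iff] at h
    simpa using h i (by omega)
  have h2 : IsPrecomplete (Ideal.span {(p : WittVector p k)}) (WittVector p k) := by
    refine ⟨fun f hf => ?_⟩
    simp only [← Ideal.one_eq_top, smul_eq_mul, mul_one, SModEq.sub_mem,
      Ideal.span_singleton_pow, Ideal.mem_span_singleton, p_pow_dvd_iff] at hf ⊢
    refine ⟨WittVector.mk p (fun n => (f (n + 1)).coeff n), fun n => ?_⟩
    rw [coeffs_eq_iff]
    intro i hi
    have e1 : ∀ j < i + 1, (f (i + 1)).coeff j = (f n).coeff j :=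
      (coeffs_eq_iff _ _ _).mp (hf (show i + 1 ≤ n by omega))
    have e2 : (WittVector.mk p (fun n => (f (n + 1)).coeff n)).coeff i
        = (f (i + 1)).coeff i := rfl
    rw [e2, e1 i (by omega)]
  exact ⟨⟩

end Statement11Aux

/-- with `x ∈ W^×`, `β ∈ W^×` with `σ²(β) − β = x`, `ζ` a primitive
`(p²−1)`-th root of unity and `u = σ(ζ) − ζ`, there is `b ∈ W^×` with
`pβb² + ub − σ⁻¹(β) = 0`. -/
theorem statement11 (p : ℕ) [Fact p.Prime] (hp : Odd p) (x β ζ : Wt p)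
    (hx : IsUnit x) (hβu : IsUnit β) (hβ : σW p (σW p β) - β = x)
    (hζ1 : ζ ^ (p ^ 2 - 1) = 1) (hζ2 : ∀ m : ℕ, 0 < m → m < p ^ 2 - 1 → ζ ^ m ≠ 1) :
    ∃ b : Wt p, IsUnit b ∧
      (p : Wt p) * β * b ^ 2 + (σW p ζ - ζ) * b - (σW p).symm β = 0 := by
  classical
  have hprime : p.Prime := ‹Fact p.Prime›.out
  have hp2 : 2 ≤ p := hprime.two_le
  have hpsq : p < p ^ 2 := by
    calc p = p ^ 1 := (pow_one p).symm
    _ < p ^ 2 := Nat.pow_lt_pow_right hprime.one_lt (by omega)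
  have hmul : (p - 1) * (p + 1) = p ^ 2 - 1 := by
    have h := Nat.sq_sub_sq p 1
    simpa [mul_comm] using h.symm
  set u : Wt p := σW p ζ - ζ with hu
  set c : Wt p := (σW p).symm β with hcdef
  have hcu : IsUnit c := hβu.map (σW p).symm.toRingHom
  set z : Kbar p := ζ.coeff 0 with hz
  have hcc : ∀ w : Wt p, WittVector.constantCoeff w = w.coeff 0 := fun _ => rfl
  have hz1 : z ^ (p ^ 2 - 1) = 1 := by
    have h := congrArg WittVector.constantCoeff hζ1
    rw [map_pow, map_one] at h
    exact h
  have hz0 : z ≠ 0 := by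
    intro h0
    rw [h0, zero_pow (by omega : p ^ 2 - 1 ≠ 0)] at hz1
    exact zero_ne_one hz1
  -- `u` is a unit
  have hzp : z ^ p ≠ z := by
    intro hfix
    have hzpow : z ^ (p - 1) = 1 := by
      have h1 : z ^ (p - 1) * z = 1 * z := by
        rw [one_mul, ← pow_succ, show p - 1 + 1 = p by omega, hfix]
      exact mul_right_cancel₀ hz0 h1
    set w : Wt p := ζ ^ (p - 1) with hw
    have hw0 : WittVector.constantCoeff w = 1 := by
      rw [hw, map_pow, hcc, ← hz, hzpow]
    have hwpow : w ^ (p + 1) = 1 := by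
      rw [hw, ← pow_mul, hmul, hζ1]
    have hgeom := geom_sum_mul w (p + 1)
    rw [hwpow, sub_self] at hgeom
    have hS : WittVector.constantCoeff (∑ i ∈ Finset.range (p + 1), w ^ i) = 1 := by
      rw [map_sum]
      have : ∀ i ∈ Finset.range (p + 1), WittVector.constantCoeff (w ^ i) = 1 := by
        intro i _
        rw [map_pow, hw0, one_pow]
      rw [Finset.sum_congr rfl this, Finset.sum_const, Finset.card_range, nsmul_eq_mul, mul_one]
      have : ((p + 1 : ℕ) : Kbar p) = 1 := by
        push_cast
        rw [CharP.cast_eq_zero (Kbar p) p, zero_add]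
      exact_mod_cast this
    have hSne : (∑ i ∈ Finset.range (p + 1), w ^ i) ≠ 0 := by
      intro h0
      rw [h0, map_zero] at hS
      exact zero_ne_one hS
    have hw1 : w - 1 = 0 := by
      rcases mul_eq_zero.mp hgeom with h | h
      · exact absurd h hSne
      · exact h
    exact hζ2 (p - 1) (by omega)
      (Nat.sub_lt_sub_right (by omega) hpsq) (sub_eq_zero.mp hw1)
  have hu0 : u.coeff 0 ≠ 0 := by
    have h1 : u.coeff 0 = z ^ p - z := by
      rw [← hcc, hu, map_sub, hcc, hcc, ← hz]
      congr 1
      rw [show σW p ζ = WittVector.frobenius ζ from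
        congrFun (WittVector.frobeniusEquiv_apply p (Kbar p)) ζ,
        WittVector.coeff_frobenius_charP]
    rw [h1]
    exact sub_ne_zero.mpr hzp
  have huu : IsUnit u := WittVector.isUnit_of_coeff_zero_ne_zero u hu0
  -- Hensel's lemma setup
  haveI : IsAdicComplete (Ideal.span {(p : Wt p)}) (Wt p) :=
    Statement11Aux.isAdicComplete
  set I : Ideal (Wt p) := Ideal.span {(p : Wt p)} with hI
  obtain ⟨C, hC⟩ := hcu
  set ci : Wt p := ↑C⁻¹ with hci
  have hCci : c * ci = 1 := by
    rw [← hC, hci]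
    exact_mod_cast C.mul_inv
  set a₀ : Wt p := u * ci with ha₀
  have ha₀u : IsUnit a₀ := huu.mul (Units.isUnit C⁻¹)
  set f : Polynomial (Wt p) :=
    Polynomial.X ^ 2 + (Polynomial.C (-(u * ci)) * Polynomial.X
      + Polynomial.C (-((p : Wt p) * β * ci))) with hf
  have hmonic : f.Monic := by
    apply Polynomial.monic_X_pow_add
    calc Polynomial.degree (Polynomial.C (-(u * ci)) * Polynomial.X
        + Polynomial.C (-((p : Wt p) * β * ci))) ≤ 1 := Polynomial.degree_linear_le
    _ < 2 := by exact_mod_cast one_lt_two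
  have heval : f.eval a₀ ∈ I := by
    have h1 : f.eval a₀ = -((p : Wt p) * β * ci) := by
      simp only [hf, Polynomial.eval_add, Polynomial.eval_pow, Polynomial.eval_X,
        Polynomial.eval_mul, Polynomial.eval_C]
      ring
    rw [h1, hI, Ideal.mem_span_singleton]
    exact ⟨-(β * ci), by ring⟩
  have hderiv : f.derivative.eval a₀ = a₀ := by
    have hd : f.derivative = Polynomial.C 2 * Polynomial.X + Polynomial.C (-(u * ci)) := by
      rw [hf]
      simp [Polynomial.derivative_X_pow]
      rw [← Polynomial.C_1, ← Polynomial.C_add, one_add_one_eq_two]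
    rw [hd]
    simp only [Polynomial.eval_add, Polynomial.eval_mul, Polynomial.eval_C, Polynomial.eval_X]
    rw [ha₀]
    ring
  obtain ⟨a, haroot, haI⟩ := HenselianRing.is_henselian (I := I) f hmonic a₀ heval
    (by rw [hderiv]; exact ha₀u.map (Ideal.Quotient.mk I))
  -- the root `a` is a unit
  have ha0 : a.coeff 0 = a₀.coeff 0 := by
    rw [hI, Ideal.mem_span_singleton] at haI
    obtain ⟨t, ht⟩ := haI
    have hh1 : a = a₀ + (p : Wt p) * t := by rw [← ht]; ring
    have hh2 := congrArg WittVector.constantCoeff hh1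
    simp only [map_add, map_mul, map_natCast, CharP.cast_eq_zero, zero_mul, add_zero] at hh2
    simpa [hcc] using hh2
  have hane : a.coeff 0 ≠ 0 := by
    rw [ha0]
    intro h0
    have h1 := ha₀u.map (WittVector.constantCoeff (p := p))
    rw [hcc, h0] at h1
    exact not_isUnit_zero h1
  have hau : IsUnit a := WittVector.isUnit_of_coeff_zero_ne_zero a hane
  obtain ⟨A, hA⟩ := hau
  refine ⟨(↑A⁻¹ : Wt p), Units.isUnit _, ?_⟩
  set b : Wt p := ↑A⁻¹ with hb
  have hab : a * b = 1 := by
    rw [← hA, hb]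
    exact_mod_cast A.mul_inv
  have hroot : a ^ 2 - u * ci * a - (p : Wt p) * β * ci = 0 := by
    have h1 : f.eval a = 0 := haroot
    simp only [hf, Polynomial.eval_add, Polynomial.eval_pow, Polynomial.eval_X,
      Polynomial.eval_mul, Polynomial.eval_C] at h1
    linear_combination h1
  show (p : Wt p) * β * b ^ 2 + u * b - c = 0
  linear_combination (-(c * b ^ 2)) * hroot + (c * (a * b + 1) - u * b) * hab
    + (-(u * a * b ^ 2 + (p : Wt p) * β * b ^ 2)) * hCci
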